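/- Let H be a real Hilbert space, r > 0, and x̄ ∈ H with ‖x̄‖ = r. If z ∈ D̂*P_{rB}(x̄)(y), then the orthogonal components of y and z with respect to x̄ coincide, i.e. y − (⟨x̄,y⟩/‖x̄‖²)x̄ = z − (⟨x̄,z⟩/‖x̄‖²)x̄. -/

import Mathlib

open RealInnerProductSpace Filter Metric

/-- `P` is the metric projection (nearest-point map) onto `C`. -/
def IsMetricProj {H : Type*} [NormedAddCommGroup H] [InnerProductSpace ℝ H]
    (C : Set H) (P : H → H) : Prop :=
  ∀ x : H, P x ∈ C ∧ ∀ w ∈ C, ‖x - P x‖ ≤ ‖x - w‖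

/-- The set `D̂*f(xb)(y)` characterized by the limsup inequality. -/
def coderivSet {H : Type*} [NormedAddCommGroup H] [InnerProductSpace ℝ H]
    (f : H → H) (xb y : H) : Set H :=
  {z | ∀ ε > (0:ℝ), ∃ δ > (0:ℝ), ∀ u : H, u ≠ xb → ‖u - xb‖ < δ →
    (⟪z, u - xb⟫ - ⟪y, f u - f xb⟫) / ‖u - xb‖ < ε}

/-- The (Fréchet) regular normal cone via the limsup inequality. -/
def regNormalCone {E : Type*} [NormedAddCommGroup E] [InnerProductSpace ℝ E]
    (Ω : Set E) (w : E) : Set E :=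
  {v | ∀ ε > (0:ℝ), ∃ δ > (0:ℝ), ∀ u ∈ Ω, u ≠ w → ‖u - w‖ < δ →
    ⟪v, u - w⟫ / ‖u - w‖ < ε}

/-- The Bouligand (contingent) tangent cone. -/
def bouligandTangentCone {E : Type*} [NormedAddCommGroup E] [NormedSpace ℝ E]
    (Ω : Set E) (w : E) : Set E :=
  {z | ∃ t : ℕ → ℝ, ∃ s : ℕ → E, (∀ n, 0 < t n) ∧
    Tendsto t atTop (nhds 0) ∧ Tendsto s atTop (nhds z) ∧ ∀ n, w + t n • s n ∈ Ω}

variable {H : Type*} [NormedAddCommGroup H] [InnerProductSpace ℝ H] [CompleteSpace H]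

open Topology

set_option linter.unusedSectionVars false

lemma proj_in (r : ℝ) (P : H → H)
    (hP : IsMetricProj (closedBall (0:H) r) P) (u : H) (hu : ‖u‖ ≤ r) : P u = u := by
  obtain ⟨_, hmin⟩ := hP u
  have h := hmin u (by simpa [mem_closedBall_zero_iff] using hu)
  simp at h
  exact (sub_eq_zero.mp h).symm

lemma proj_out (r : ℝ) (hr : 0 < r) (P : H → H)
    (hP : IsMetricProj (closedBall (0:H) r) P) (u : H) (hu : r ≤ ‖u‖) :
    P u = (r / ‖u‖) • u := by
  obtain ⟨hmem, hmin⟩ := hP u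
  have hun : 0 < ‖u‖ := lt_of_lt_of_le hr hu
  have hwmem : (r / ‖u‖) • u ∈ closedBall (0:H) r := by
    rw [mem_closedBall_zero_iff, norm_smul, Real.norm_eq_abs, abs_of_pos (by positivity)]
    field_simp
    exact le_rfl
  have hdist : ‖u - (r / ‖u‖) • u‖ = ‖u‖ - r := by
    have : u - (r / ‖u‖) • u = (1 - r / ‖u‖) • u := by
      rw [sub_smul, one_smul]
    rw [this, norm_smul, Real.norm_eq_abs, abs_of_nonneg (by
      rw [sub_nonneg, div_le_one hun]; exact hu)]
    field_simp
  have h1 : ‖u - P u‖ ≤ ‖u‖ - r := by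
    calc ‖u - P u‖ ≤ ‖u - (r / ‖u‖) • u‖ := hmin _ hwmem
    _ = ‖u‖ - r := hdist
  have hPn : ‖P u‖ ≤ r := by simpa [mem_closedBall_zero_iff] using hmem
  have htri : ‖u‖ ≤ ‖P u‖ + ‖u - P u‖ := by
    calc ‖u‖ = ‖P u + (u - P u)‖ := by rw [add_sub_cancel]
    _ ≤ _ := norm_add_le _ _
  have hPr : ‖P u‖ = r := by linarith
  have heq : ‖u - P u‖ = ‖u‖ - r := by linarith
  have hinner : ⟪u, P u⟫ = ‖u‖ * ‖P u‖ := by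
    have hsq : ‖u - P u‖^2 = ‖u‖^2 - 2*⟪u, P u⟫ + ‖P u‖^2 := by
      rw [norm_sub_sq_real]
    rw [heq] at hsq
    nlinarith [hsq, sq_nonneg (‖u‖ - ‖P u‖)]
  have hray := (inner_eq_norm_mul_iff_real (x := u) (y := P u)).mp hinner
  rw [hPr] at hray
  have : (‖u‖⁻¹ * r) • u = P u := by
    rw [mul_smul, hray, smul_smul, inv_mul_cancel₀ hun.ne', one_smul]
  rw [← this, div_eq_inv_mul]

theorem stmt9 (r : ℝ) (hr : 0 < r) (xb : H) (hx : ‖xb‖ = r) (P : H → H)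
    (hP : IsMetricProj (closedBall (0:H) r) P) (y z : H)
    (hz : z ∈ coderivSet P xb y) :
    y - (⟪xb, y⟫ / ‖xb‖ ^ 2) • xb = z - (⟪xb, z⟫ / ‖xb‖ ^ 2) • xb := by
  have hxne : ‖xb‖ ≠ 0 := by rw [hx]; exact hr.ne'
  have hPxb : P xb = xb := proj_in r P hP xb (le_of_eq hx)
  have key : ∀ v : H, ⟪xb, v⟫ = 0 → ⟪z, v⟫ - ⟪y, v⟫ ≤ 0 := by
    intro v hv
    rcases eq_or_ne v 0 with rfl | hv0
    · simp
    have hvp : 0 < ‖v‖ := norm_pos_iff.mpr hv0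
    set n : ℝ → ℝ := fun t => Real.sqrt (r^2 + t^2*‖v‖^2) with hn
    have hnpos : ∀ t, 0 < n t := fun t => Real.sqrt_pos.mpr (by positivity)
    have hnr : ∀ t, r ≤ n t := by
      intro t
      rw [show r = Real.sqrt (r^2) from (Real.sqrt_sq hr.le).symm]
      exact Real.sqrt_le_sqrt (by nlinarith [sq_nonneg (t*‖v‖)])
    have hnsq : ∀ t, (n t)^2 = r^2 + t^2*‖v‖^2 := fun t => Real.sq_sqrt (by positivity)
    set F : ℝ → ℝ := fun t =>
      ⟪z, v⟫/‖v‖ - (r/(n t))*(⟪y, v⟫/‖v‖) + (t*‖v‖/((n t)*(n t + r)))*⟪y, xb⟫ with hF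
    have hncont : Continuous n := by
      apply Real.continuous_sqrt.comp
      continuity
    have hn0 : n 0 = r := by simp [hn, Real.sqrt_sq hr.le]
    have hFcont : ContinuousAt F 0 := by
      apply ContinuousAt.add
      · apply ContinuousAt.sub continuousAt_const
        exact (continuousAt_const.div hncont.continuousAt
          (by rw [hn0]; exact hr.ne')).mul continuousAt_const
      · apply ContinuousAt.mul _ continuousAt_const
        apply ContinuousAt.div (by fun_prop)
        · exact hncont.continuousAt.mul (hncont.continuousAt.add continuousAt_const)
        · rw [hn0]; positivity
    have hF0 : F 0 = (⟪z, v⟫ - ⟪y, v⟫)/‖v‖ := by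
      show ⟪z, v⟫/‖v‖ - (r/(n 0))*(⟪y, v⟫/‖v‖) + ((0:ℝ)*‖v‖/((n 0)*(n 0 + r)))*⟪y, xb⟫ = _
      rw [hn0, div_self hr.ne']
      ring
    have main : ∀ ε > (0:ℝ), (⟪z, v⟫ - ⟪y, v⟫)/‖v‖ ≤ ε := by
      intro ε hε
      obtain ⟨δ, hδ, hd⟩ := hz ε hε
      rw [← hF0]
      have hev : ∀ᶠ t in 𝓝[>] (0:ℝ), F t ≤ ε := by
        have hmem : Set.Ioo (0:ℝ) (δ/‖v‖) ∈ 𝓝[>] (0:ℝ) :=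
          Ioo_mem_nhdsGT_of_mem ⟨le_refl 0, by positivity⟩
        filter_upwards [hmem] with t ht
        obtain ⟨ht0, htδ⟩ := ht
        set u : H := xb + t • v with hu
        have hune : u ≠ xb := by
          simp only [hu, ne_eq, add_eq_left]
          exact smul_ne_zero ht0.ne' hv0
        have hud : u - xb = t • v := by simp [hu]
        have hudn : ‖u - xb‖ = t * ‖v‖ := by
          rw [hud, norm_smul, Real.norm_eq_abs, abs_of_pos ht0]
        have hlt : ‖u - xb‖ < δ := by
          rw [hudn]; rw [lt_div_iff₀ hvp] at htδ; linarith
        have hun2 : ‖u‖^2 = r^2 + t^2*‖v‖^2 := by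
          rw [hu, norm_add_sq_real, real_inner_smul_right, hv, hx, norm_smul,
            Real.norm_eq_abs, mul_pow, sq_abs]
          ring
        have hunn : ‖u‖ = n t := by
          calc ‖u‖ = Real.sqrt (‖u‖^2) := (Real.sqrt_sq (norm_nonneg _)).symm
          _ = n t := by rw [hun2]
        have hPu : P u = (r / n t) • u := by
          rw [← hunn]; exact proj_out r hr P hP u (by rw [hunn]; exact hnr t)
        have hkey := hd u hune hlt
        have hEq : (⟪z, u - xb⟫ - ⟪y, P u - P xb⟫)/‖u - xb‖ = F t := by
          rw [hudn, hud, hPu, hPxb, hu]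
          simp only [inner_sub_right, inner_add_right, real_inner_smul_right]
          have hs := hnsq t
          have h1 : n t ≠ 0 := (hnpos t).ne'
          have h2 : n t + r ≠ 0 := by positivity
          rw [hF]
          field_simp
          linear_combination (⟪y, xb⟫ : ℝ) * hs
        rw [hEq] at hkey
        linarith
      have hle : F 0 ≤ ε := le_of_tendsto hFcont.continuousWithinAt hev
      exact hle
    have h0 : (⟪z, v⟫ - ⟪y, v⟫)/‖v‖ ≤ 0 := by
      by_contra h
      push_neg at h
      linarith [main ((⟪z, v⟫ - ⟪y, v⟫)/‖v‖/2) (by linarith)]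
    have := mul_le_mul_of_nonneg_right h0 hvp.le
    rwa [div_mul_cancel₀ _ hvp.ne', zero_mul] at this
  set cy := ⟪xb, y⟫ / ‖xb‖ ^ 2 with hcy
  set cz := ⟪xb, z⟫ / ‖xb‖ ^ 2 with hcz
  set d : H := (y - cy • xb) - (z - cz • xb) with hd
  have hxd : ⟪xb, d⟫ = 0 := by
    simp only [hd, inner_sub_right, real_inner_smul_right, real_inner_self_eq_norm_sq, hcy, hcz]
    have : ‖xb‖^2 ≠ 0 := pow_ne_zero _ hxne
    field_simp
    ring
  have hk := key (-d) (by rw [inner_neg_right, hxd, neg_zero])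
  have hyz : y - z = d + (cy - cz) • xb := by rw [hd]; module
  have hcalc : ⟪z, -d⟫ - ⟪y, -d⟫ = ‖d‖^2 := by
    have h1 : ⟪z, -d⟫ - ⟪y, -d⟫ = ⟪y - z, d⟫ := by
      simp [inner_neg_right, inner_sub_left]; ring
    have hdx : ⟪d, xb⟫ = 0 := by rw [real_inner_comm]; exact hxd
    rw [h1, hyz]
    simp [inner_add_left, real_inner_smul_left, hxd, hdx, real_inner_self_eq_norm_sq]
  rw [hcalc] at hk
  have : d = 0 := by
    have : ‖d‖ = 0 := by nlinarith [norm_nonneg d]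
    exact norm_eq_zero.mp this
  exact sub_eq_zero.mp (hd ▸ this)
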